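/- If G is an unperforated ordered abelian group with Riesz interpolation, then the ordered rational vector space G ⊗_ℤ ℚ (with the cone generated by the image of G⁺) also has Riesz interpolation. -/

import Mathlib

open TensorProduct

/-- The cone of `ℚ ⊗[ℤ] G` generated by the image of the positive cone of `G`:
all nonnegative rational multiples of images of positive elements. -/
def qTensorCone (G : Type*) [AddCommGroup G] [PartialOrder G] :
    Set (ℚ ⊗[ℤ] G) :=
  {x | ∃ (q : ℚ) (g : G), 0 ≤ q ∧ 0 ≤ g ∧ x = q • ((1 : ℚ) ⊗ₜ[ℤ] g)}

/-- The natural map `G → ℚ ⊗[ℤ] G` kills only torsion. -/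
lemma aux_torsion {G : Type*} [AddCommGroup G] (x y : G)
    (h : (1 : ℚ) ⊗ₜ[ℤ] x = (1 : ℚ) ⊗ₜ[ℤ] y) :
    ∃ c : ℤ, c ≠ 0 ∧ c • x = c • y := by
  have hloc : IsLocalizedModule (nonZeroDivisors ℤ) (TensorProduct.mk ℤ ℚ G 1) :=
    (isLocalizedModule_iff_isBaseChange (nonZeroDivisors ℤ) ℚ _).mpr
      (TensorProduct.isBaseChange ℤ G ℚ)
  obtain ⟨c, hc⟩ := hloc.exists_of_eq (x₁ := x) (x₂ := y) h
  exact ⟨(c : ℤ), nonZeroDivisors.coe_ne_zero c, hc⟩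

/-- Pulling a natural scalar out of the right factor of a tensor. -/
lemma aux_tmul_nsmul {G : Type*} [AddCommGroup G] (k : ℕ) (g : G) :
    (1 : ℚ) ⊗ₜ[ℤ] (k • g) = (k : ℚ) • ((1 : ℚ) ⊗ₜ[ℤ] g) := by
  induction k with
  | zero => simp
  | succ k ih =>
    rw [succ_nsmul, TensorProduct.tmul_add, ih, Nat.cast_succ, add_smul, one_smul]

theorem stmt4 {G : Type*} [AddCommGroup G] [PartialOrder G]
    (hadd : ∀ g h x : G, g ≤ h → g + x ≤ h + x)
    (hdir : ∀ g h : G, ∃ y : G, g ≤ y ∧ h ≤ y)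
    (hunperf : ∀ (n : ℕ) (g : G), 0 < n → 0 ≤ n • g → 0 ≤ g)
    (hRiesz : ∀ a₁ a₂ b₁ b₂ : G, a₁ ≤ b₁ → a₁ ≤ b₂ → a₂ ≤ b₁ → a₂ ≤ b₂ →
      ∃ z : G, a₁ ≤ z ∧ a₂ ≤ z ∧ z ≤ b₁ ∧ z ≤ b₂) :
    ∀ a₁ a₂ b₁ b₂ : ℚ ⊗[ℤ] G,
      b₁ - a₁ ∈ qTensorCone G → b₂ - a₁ ∈ qTensorCone G →
      b₁ - a₂ ∈ qTensorCone G → b₂ - a₂ ∈ qTensorCone G →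
      ∃ z : ℚ ⊗[ℤ] G,
        z - a₁ ∈ qTensorCone G ∧ z - a₂ ∈ qTensorCone G ∧
        b₁ - z ∈ qTensorCone G ∧ b₂ - z ∈ qTensorCone G := by
  -- positive cone is closed under natural scalar multiplication
  have hnsmul : ∀ (g : G), 0 ≤ g → ∀ n : ℕ, 0 ≤ n • g := by
    intro g hg n
    induction n with
    | zero => simp
    | succ n ih =>
      calc (0 : G) ≤ n • g := ih
        _ ≤ g + n • g := by
            have := hadd 0 g (n • g) hg
            rwa [zero_add] at this
        _ = (n + 1) • g := by rw [add_nsmul, one_nsmul, add_comm]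
  -- subtraction compatibility
  have hsub : ∀ g h : G, 0 ≤ h → g - h ≤ g := by
    intro g h hh
    have := hadd 0 h (g - h) hh
    rw [zero_add] at this
    simpa using this
  have hsub' : ∀ g h : G, h ≤ g → 0 ≤ g - h := by
    intro g h hh
    have := hadd h g (-h) hh
    simpa [← sub_eq_add_neg] using this
  -- normal form of cone elements: (1/n) • (1 ⊗ g) with n > 0, g ≥ 0
  have hform : ∀ x ∈ qTensorCone G, ∀ m : ℕ, 0 < m →
      ∃ (n : ℕ) (g : G), 0 < n ∧ 0 ≤ g ∧ m ∣ n ∧ x = (1 / (n : ℚ)) • ((1 : ℚ) ⊗ₜ[ℤ] g) := by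
    rintro x ⟨q, g, hq, hg, rfl⟩ m hm
    refine ⟨q.den * m, (q.num.toNat * m) • g, by positivity, hnsmul g hg _,
      ⟨q.den, mul_comm _ _⟩, ?_⟩
    rw [aux_tmul_nsmul, smul_smul]
    congr 1
    push_cast
    have hnum : ((q.num.toNat : ℚ)) = ((q.num : ℚ)) := by
      have := Int.toNat_of_nonneg (Rat.num_nonneg.mpr hq)
      exact_mod_cast congrArg (fun z : ℤ => (z : ℚ)) this
    have hd0 : (q.den : ℚ) ≠ 0 := Nat.cast_ne_zero.mpr q.den_nz
    have hm0 : (m : ℚ) ≠ 0 := Nat.cast_ne_zero.mpr hm.ne'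
    rw [hnum]
    field_simp
    rw [Rat.mul_den_eq_num]
  -- extract the four witnesses with a common denominator
  intro a₁ a₂ b₁ b₂ h11 h12 h21 h22
  obtain ⟨n11, g0, hn11, hg0, -, he11⟩ := hform _ h11 1 one_pos
  obtain ⟨n12, g1, hn12, hg1, hd12, he12⟩ := hform _ h12 n11 hn11
  obtain ⟨n21, g2, hn21, hg2, hd21, he21⟩ := hform _ h21 n12 hn12
  obtain ⟨n, g3, hn, hg3, hd, he22⟩ := hform _ h22 n21 hn21
  have hdiv11 : n11 ∣ n := dvd_trans hd12 (dvd_trans hd21 hd)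
  have hdiv12 : n12 ∣ n := dvd_trans hd21 hd
  have hdiv21 : n21 ∣ n := hd
  -- rescale all to denominator n
  have hscale : ∀ (m : ℕ) (g : G), 0 < m → m ∣ n →
      (1 / (m : ℚ)) • ((1 : ℚ) ⊗ₜ[ℤ] g) = (1 / (n : ℚ)) • ((1 : ℚ) ⊗ₜ[ℤ] ((n / m) • g)) := by
    intro m g hm hmn
    rw [aux_tmul_nsmul, smul_smul]
    congr 1
    have h2 : ((n / m : ℕ) : ℚ) = (n : ℚ) / (m : ℚ) := Nat.cast_div_charZero hmn
    have hm0 : (m : ℚ) ≠ 0 := Nat.cast_ne_zero.mpr hm.ne'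
    have hn0 : (n : ℚ) ≠ 0 := Nat.cast_ne_zero.mpr hn.ne'
    rw [h2]
    field_simp
  set g11 := (n / n11) • g0 with hg11def
  set g12 := (n / n12) • g1 with hg12def
  set g21 := (n / n21) • g2 with hg21def
  have hg11 : 0 ≤ g11 := hnsmul _ hg0 _
  have hg12 : 0 ≤ g12 := hnsmul _ hg1 _
  have hg21 : 0 ≤ g21 := hnsmul _ hg2 _
  have he11' : b₁ - a₁ = (1 / (n : ℚ)) • ((1 : ℚ) ⊗ₜ[ℤ] g11) := by
    rw [he11, hscale _ _ hn11 hdiv11]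
  have he12' : b₂ - a₁ = (1 / (n : ℚ)) • ((1 : ℚ) ⊗ₜ[ℤ] g12) := by
    rw [he12, hscale _ _ hn12 hdiv12]
  have he21' : b₁ - a₂ = (1 / (n : ℚ)) • ((1 : ℚ) ⊗ₜ[ℤ] g21) := by
    rw [he21, hscale _ _ hn21 hdiv21]
  have he22' : b₂ - a₂ = (1 / (n : ℚ)) • ((1 : ℚ) ⊗ₜ[ℤ] g3) := he22
  have hn0 : (1 / (n : ℚ)) ≠ 0 := by
    have : (n : ℚ) ≠ 0 := Nat.cast_ne_zero.mpr hn.ne'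
    simp [this]
  -- a₂ - a₁ = (1/n)(1 ⊗ (g11 - g21)) = (1/n)(1 ⊗ (g12 - g3))
  have key : (1 : ℚ) ⊗ₜ[ℤ] (g11 - g21) = (1 : ℚ) ⊗ₜ[ℤ] (g12 - g3) := by
    have h1 : (1 / (n : ℚ)) • ((1 : ℚ) ⊗ₜ[ℤ] (g11 - g21))
        = (1 / (n : ℚ)) • ((1 : ℚ) ⊗ₜ[ℤ] (g12 - g3)) := by
      rw [TensorProduct.tmul_sub, TensorProduct.tmul_sub, smul_sub, smul_sub,
        ← he11', ← he21', ← he12', ← he22']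
      abel
    exact smul_right_injective _ hn0 h1
  -- torsion-freeness via unperforation: g11 - g21 = g12 - g3
  have heqG : g11 - g21 = g12 - g3 := by
    obtain ⟨c, hc, hcs⟩ := aux_torsion _ _ key
    set u := (g11 - g21) - (g12 - g3) with hu
    have hcu : c • u = 0 := by rw [hu, smul_sub, hcs, sub_self]
    have habs : c.natAbs • u = 0 := by
      have h1 : ((c.natAbs : ℤ)) • u = c.natAbs • u := natCast_zsmul u c.natAbs
      rcases Int.natAbs_eq c with h | h
      · rw [← h1, ← h, hcu]
      · rw [← h1, show ((c.natAbs : ℤ)) = -c from by omega, neg_smul, hcu, neg_zero]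
    have hpos : 0 < c.natAbs := Int.natAbs_pos.mpr hc
    have h1 : (0 : G) ≤ u := hunperf c.natAbs u hpos (by rw [habs])
    have h2 : (0 : G) ≤ -u := by
      apply hunperf c.natAbs (-u) hpos
      rw [smul_neg, habs, neg_zero]
    have h3 : u ≤ 0 := by
      have := hadd 0 (-u) u h2
      simpa using this
    have hu0 : u = 0 := le_antisymm h3 h1
    rw [hu] at hu0
    exact sub_eq_zero.mp hu0
  -- Riesz interpolation in G: find w with 0, (g11 - g21) ≤ w ≤ g11, g12
  have hd_le1 : g11 - g21 ≤ g11 := hsub _ _ hg21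
  have hd_le2 : g11 - g21 ≤ g12 := by rw [heqG]; exact hsub _ _ hg3
  obtain ⟨w, hw0, hwd, hw1, hw2⟩ := hRiesz 0 (g11 - g21) g11 g12 hg11 hg12 hd_le1 hd_le2
  refine ⟨a₁ + (1 / (n : ℚ)) • ((1 : ℚ) ⊗ₜ[ℤ] w), ?_, ?_, ?_, ?_⟩
  · exact ⟨1 / (n : ℚ), w, by positivity, hw0, by abel⟩
  · refine ⟨1 / (n : ℚ), w - (g11 - g21), by positivity, hsub' _ _ hwd, ?_⟩
    have ha : a₁ - a₂ = (1 / (n : ℚ)) • ((1 : ℚ) ⊗ₜ[ℤ] (-(g11 - g21))) := by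
      have h0 : a₁ - a₂ = (b₁ - a₂) - (b₁ - a₁) := by abel
      rw [h0, he21', he11', ← smul_sub, ← TensorProduct.tmul_sub]
      congr 2
      abel
    have h0 : a₁ + (1 / (n : ℚ)) • ((1:ℚ) ⊗ₜ[ℤ] w) - a₂
        = (1 / (n : ℚ)) • ((1:ℚ) ⊗ₜ[ℤ] (-(g11 - g21))) + (1 / (n : ℚ)) • ((1:ℚ) ⊗ₜ[ℤ] w) := by
      rw [← ha]; abel
    rw [h0, ← smul_add, ← TensorProduct.tmul_add]
    congr 2
    abel
  · refine ⟨1 / (n : ℚ), g11 - w, by positivity, hsub' _ _ hw1, ?_⟩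
    have h0 : b₁ - (a₁ + (1 / (n : ℚ)) • ((1:ℚ) ⊗ₜ[ℤ] w))
        = (b₁ - a₁) - (1 / (n : ℚ)) • ((1:ℚ) ⊗ₜ[ℤ] w) := by abel
    rw [h0, he11', ← smul_sub, ← TensorProduct.tmul_sub]
  · refine ⟨1 / (n : ℚ), g12 - w, by positivity, hsub' _ _ hw2, ?_⟩
    have h0 : b₂ - (a₁ + (1 / (n : ℚ)) • ((1:ℚ) ⊗ₜ[ℤ] w))
        = (b₂ - a₁) - (1 / (n : ℚ)) • ((1:ℚ) ⊗ₜ[ℤ] w) := by abel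
    rw [h0, he12', ← smul_sub, ← TensorProduct.tmul_sub]
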